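/- For any symbol p and strings u, v, w (none a substring of another), the number of occurrences of p in pref(u,v) plus the number in pref(v,w) is at least the number of occurrences of p in pref(u,w). -/

import Mathlib

/-- The length of the overlap of `s` and `t`: the longest `y` such that
`s = x ++ y` and `t = y ++ z` with `x, z` non-empty. -/
def ovLen {α : Type*} [DecidableEq α] (s t : List α) : ℕ :=
  Nat.findGreatest
    (fun k => k < s.length ∧ k < t.length ∧ s.drop (s.length - k) = t.take k)
    (min s.length t.length)

/-- The overlap of `s` and `t`. -/
def ov {α : Type*} [DecidableEq α] (s t : List α) : List α :=
  t.take (ovLen s t)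

/-- The prefix part of `s` with respect to `t`: `s = pre s t ++ ov s t`. -/
def pre {α : Type*} [DecidableEq α] (s t : List α) : List α :=
  s.take (s.length - ovLen s t)

/-- The suffix part of `t` with respect to `s`: `t = ov s t ++ suf s t`. -/
def suf {α : Type*} [DecidableEq α] (s t : List α) : List α :=
  t.drop (ovLen s t)

lemma ovLen_spec {α : Type*} [DecidableEq α] {s t : List α} (hs : s ≠ []) (ht : t ≠ []) :
    ovLen s t < s.length ∧ ovLen s t < t.length ∧
      s.drop (s.length - ovLen s t) = t.take (ovLen s t) := by
  have := Nat.findGreatest_spec (m := 0)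
    (P := fun k => k < s.length ∧ k < t.length ∧ s.drop (s.length - k) = t.take k)
    (n := min s.length t.length) (Nat.zero_le _)
    ⟨List.length_pos_iff.2 hs, List.length_pos_iff.2 ht, by simp⟩
  exact this

lemma pre_append {α : Type*} [DecidableEq α] {s t : List α} (hs : s ≠ []) (ht : t ≠ []) :
    pre s t ++ t = s ++ suf s t := by
  obtain ⟨h1, h2, h3⟩ := ovLen_spec hs ht
  calc pre s t ++ t = s.take (s.length - ovLen s t) ++ (t.take (ovLen s t) ++ t.drop (ovLen s t)) := by
        rw [List.take_append_drop]; rfl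
    _ = (s.take (s.length - ovLen s t) ++ s.drop (s.length - ovLen s t)) ++ t.drop (ovLen s t) := by
        rw [h3, List.append_assoc]
    _ = s ++ suf s t := by rw [List.take_append_drop]; rfl

/-- Occurrence-counting triangle inequality for the prefix function. -/
theorem stmt_2 {α : Type*} [DecidableEq α] (p : α) (u v w : List α)
    (hne : ∀ x ∈ [u, v, w], x ≠ ([] : List α))
    (hnosub : ∀ x ∈ [u, v, w], ∀ y ∈ [u, v, w], x ≠ y → ¬ x <:+: y) :
    (pre u v).count p + (pre v w).count p ≥ (pre u w).count p := by
  have hu : u ≠ [] := hne u (by simp)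
  have hv : v ≠ [] := hne v (by simp)
  have hw : w ≠ [] := hne w (by simp)
  set S : List α := pre u v ++ pre v w ++ w with hS
  set L : ℕ := (pre u v).length + (pre v w).length with hL
  have hSL : S.take L = pre u v ++ pre v w := by
    rw [hS, hL, List.take_left' (by simp)]
  have hdropS : S.drop L = w := by
    rw [hS, hL]
    rw [show pre u v ++ pre v w ++ w = (pre u v ++ pre v w) ++ w from by simp]
    rw [List.drop_left' (by simp)]
  have hSeq : S = u ++ (suf u v ++ suf v w) := by
    rw [hS, List.append_assoc, pre_append hv hw, ← List.append_assoc, pre_append hu hv,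
      List.append_assoc]
  have hupre : u <+: S := ⟨_, hSeq.symm⟩
  have hutake : u = S.take u.length := List.prefix_iff_eq_take.1 hupre
  have huleS : u.length ≤ S.length := hupre.length_le
  obtain ⟨huw1, huw2, huw3⟩ := ovLen_spec hu hw
  obtain ⟨huv1, _, _⟩ := ovLen_spec hu hv
  obtain ⟨hvw1, _, _⟩ := ovLen_spec hv hw
  -- L ≥ 1
  have hL1 : 1 ≤ L := by
    have : 1 ≤ (pre u v).length := by
      simp only [pre, List.length_take]
      omega
    omega
  -- u.length < L + w.length, else w is a suffix (hence infix) of u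
  have hulen : u.length < L + w.length := by
    by_contra h
    push_neg at h
    have hSlen : S.length = L + w.length := by
      rw [hS]; simp [hL]; omega
    have huS : u = S := List.IsPrefix.eq_of_length_le hupre (by omega)
    have hwu : w <:+: u := by
      rw [huS]
      exact (List.suffix_append _ _).isInfix
    have hlen : u.length = L + w.length := by rw [huS, hSlen]
    have : w ≠ u := by
      intro h'
      rw [h'] at hlen
      omega
    exact hnosub w (by simp) u (by simp) this hwu
  -- maximality
  have hmax : u.length - ovLen u w ≤ L := by
    by_contra h
    push_neg at h
    set k : ℕ := u.length - L with hk
    have hk1 : ovLen u w < k := by omega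
    have hk2 : k < u.length := by omega
    have hk3 : k < w.length := by omega
    have hkP : u.drop (u.length - k) = w.take k := by
      rw [show u.length - k = L from by omega]
      conv_lhs => rw [hutake]
      rw [List.drop_take, hdropS]
    have := Nat.le_findGreatest (m := k)
      (P := fun k => k < u.length ∧ k < w.length ∧ u.drop (u.length - k) = w.take k)
      (n := min u.length w.length) (by omega) ⟨hk2, hk3, hkP⟩
    have : k ≤ ovLen u w := this
    omega
  -- pre u w is a prefix of pre u v ++ pre v w
  have hpref : pre u w <+: pre u v ++ pre v w := by
    rw [← hSL]
    have : pre u w = S.take (u.length - ovLen u w) := by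
      obtain ⟨r, hr⟩ := hupre
      rw [pre, ← hr, List.take_append_of_le_length (by omega)]
    have h2 : S.take (u.length - ovLen u w) = (S.take L).take (u.length - ovLen u w) := by
      rw [List.take_take, min_eq_left hmax]
    rw [this, h2]
    exact List.take_prefix _ _
  calc (pre u w).count p ≤ (pre u v ++ pre v w).count p :=
        hpref.sublist.count_le p
    _ = (pre u v).count p + (pre v w).count p := List.count_append
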